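/- Let m ≥ 0, let n ≥ 1, let v ⊆ Fin n have cardinality m, and let ℓ_T be a left bracketing function on Fin n. Let u = { i ∈ Fin(m+1) | i ≠ 0 } and let ℓ_⊥ be the bottom lbf on Fin(m+1) (ℓ_⊥(m) = m and ℓ_⊥(i) = 0 for i < m). Then there exists exactly one explicit Fsk-morphism φ from (Fin(m+1), u, ℓ_⊥) to (Fin n, v, ℓ_T). -/

import Mathlib

/-- A left bracketing function on `Fin m`. -/
def IsLbf {m : ℕ} (ℓ : Fin m → Fin m) : Prop :=
  (∀ j, ℓ j ≤ j) ∧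
  (∀ i j : Fin m, ℓ j ≤ i → i < j → ℓ j ≤ ℓ i) ∧
  (∀ j : Fin m, (j : ℕ) = m - 1 → ℓ j = j)

/-- `φ` is an explicit Fsk-morphism from `(Fin a, u, ℓS)` to `(Fin b, v, ℓT)`:
it is monotone, preserves `0` (hence has a right adjoint `φ*`), `φ` and `φ*` restrict
to mutually inverse bijections between `u` and `v`, and whenever `φ(j) < φ(j+1)` one
has `φ(ℓS(j)) ≤ ℓT(φ(j+1) - 1)`. -/
def IsFskMor {a b : ℕ} (φ : Fin a → Fin b)
    (u : Set (Fin a)) (ℓS : Fin a → Fin a)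
    (v : Set (Fin b)) (ℓT : Fin b → Fin b) : Prop :=
  Monotone φ ∧
  (∀ i : Fin a, (i : ℕ) = 0 → (φ i : ℕ) = 0) ∧
  (∃ φs : Fin b → Fin a, (∀ i j, φ i ≤ j ↔ i ≤ φs j) ∧
    (∀ j ∈ u, φ j ∈ v) ∧ (∀ i ∈ v, φs i ∈ u) ∧
    (∀ j ∈ u, φs (φ j) = j) ∧ (∀ i ∈ v, φ (φs i) = i)) ∧
  (∀ (j : Fin a) (h : (j : ℕ) + 1 < a),
    φ j < φ ⟨(j : ℕ) + 1, h⟩ →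
      φ (ℓS j) ≤ ℓT ⟨(φ ⟨(j : ℕ) + 1, h⟩ : ℕ) - 1,
        lt_of_le_of_lt (Nat.sub_le _ _) (Fin.is_lt _)⟩)

/-- `(Fin (m+1), Fin (m+1) \ {0}, ⊥)` is initial among objects `(Fin n, v, ℓT)`
with `|v| = m`. -/
theorem stmt13 {m n : ℕ} (hn : 1 ≤ n)
    (v : Finset (Fin n)) (hv : v.card = m)
    (ℓT : Fin n → Fin n) (hℓT : IsLbf ℓT) :
    ∃! φ : Fin (m + 1) → Fin n,
      IsFskMor φ {i : Fin (m + 1) | i ≠ 0}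
        (fun i : Fin (m + 1) => if (i : ℕ) = m then i else 0)
        (↑v) ℓT := by
  haveI : NeZero n := ⟨by omega⟩
  set e : Fin m ↪o Fin n := v.orderEmbOfFin hv with he
  set φ : Fin (m + 1) → Fin n :=
    fun i => if h : (i : ℕ) = 0 then 0
      else e ⟨(i : ℕ) - 1, by have := i.isLt; omega⟩ with hφdef
  have hφ0 : ∀ i : Fin (m+1), (i:ℕ) = 0 → φ i = 0 := by
    intro i hi; simp only [hφdef]; rw [dif_pos hi]
  have hφsucc : ∀ k : Fin m, φ ⟨(k : ℕ) + 1, by omega⟩ = e k := by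
    intro k
    simp only [hφdef]
    rw [dif_neg (by simp)]
    congr 1
  have hmem : ∀ j : Fin (m+1), (j:ℕ) ≠ 0 → φ j ∈ v := by
    intro j hj
    simp only [hφdef]
    rw [dif_neg hj]
    exact v.orderEmbOfFin_mem hv _
  have hmono : Monotone φ := by
    intro i j hij
    by_cases hi : (i:ℕ) = 0
    · rw [hφ0 i hi]; exact Fin.zero_le _
    · have hj : (j:ℕ) ≠ 0 := by
        intro h; apply hi; have := Fin.le_def.mp hij; omega
      simp only [hφdef]
      rw [dif_neg hi, dif_neg hj]
      exact e.monotone (by simp [Fin.le_def]; have := Fin.le_def.mp hij; omega)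
  have hstrict : ∀ i j : Fin (m+1), (i:ℕ) ≠ 0 → i < j → φ i < φ j := by
    intro i j hi hij
    have hj : (j:ℕ) ≠ 0 := by
      have := Fin.lt_def.mp hij; omega
    simp only [hφdef]
    rw [dif_neg hi, dif_neg hj]
    exact e.strictMono (by simp [Fin.lt_def]; have := Fin.lt_def.mp hij; omega)
  -- right adjoint
  have hne : ∀ j : Fin n, (Finset.univ.filter fun i : Fin (m+1) => φ i ≤ j).Nonempty := by
    intro j
    exact ⟨0, by simp [hφ0 0 rfl, Fin.zero_le]⟩
  set φs : Fin n → Fin (m+1) := fun j => (Finset.univ.filter fun i => φ i ≤ j).max' (hne j)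
    with hφsdef
  have hadj : ∀ (i : Fin (m+1)) (j : Fin n), φ i ≤ j ↔ i ≤ φs j := by
    intro i j
    constructor
    · intro h
      exact Finset.le_max' _ _ (by simp [h])
    · intro h
      have h2 : φs j ∈ Finset.univ.filter fun i => φ i ≤ j := Finset.max'_mem _ _
      simp at h2
      exact le_trans (hmono h) h2
  have hcancel : ∀ j : Fin (m+1), (j:ℕ) ≠ 0 → φs (φ j) = j := by
    intro j hj
    have h1 : j ≤ φs (φ j) := (hadj j (φ j)).mp le_rfl
    have h2 : φs (φ j) ≤ j := by
      by_contra h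
      push_neg at h
      have := hstrict j _ hj h
      have h3 : φ (φs (φ j)) ≤ φ j := by
        have := (hadj (φs (φ j)) (φ j)).mpr le_rfl
        exact this
      exact absurd h3 (not_le.mpr this)
    exact le_antisymm h2 h1
  have hsurj : ∀ i : Fin n, i ∈ v → ∃ k : Fin m, e k = i := by
    intro i hi
    have : i ∈ Set.range e := by rw [v.range_orderEmbOfFin hv]; exact hi
    exact this
  refine ⟨φ, ⟨hmono, fun i hi => by rw [hφ0 i hi]; exact Fin.val_zero n, ⟨φs, hadj, ?_, ?_, ?_, ?_⟩, ?_⟩, ?_⟩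
  · intro j hj
    simp only [Set.mem_setOf_eq] at hj
    exact hmem j (fun h => hj (Fin.ext h))
  · intro i hi
    obtain ⟨k, hk⟩ := hsurj i hi
    have hj : φ ⟨(k:ℕ)+1, by omega⟩ = i := by rw [hφsucc k, hk]
    have : (⟨(k:ℕ)+1, by omega⟩ : Fin (m+1)) ≤ φs i := by
      rw [← hadj, hj]
    simp only [Set.mem_setOf_eq]
    intro h0
    rw [h0] at this
    have := Fin.le_def.mp this
    simp at this
  · intro j hj
    simp only [Set.mem_setOf_eq] at hj
    exact hcancel j (fun h => hj (Fin.ext h))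
  · intro i hi
    obtain ⟨k, hk⟩ := hsurj i hi
    have hj : φ ⟨(k:ℕ)+1, by omega⟩ = i := by rw [hφsucc k, hk]
    rw [← hj, hcancel _ (by simp)]
  · -- condition (d)
    intro j h hlt
    have hjm : (j:ℕ) ≠ m := by omega
    have hz : (fun i : Fin (m+1) => if (i : ℕ) = m then i else 0) j = 0 := by
      simp [hjm]
    rw [hz, hφ0 0 rfl]
    exact Fin.zero_le _
  · -- uniqueness
    intro ψ hψ
    obtain ⟨ψmono, ψ0, ⟨ψs, ψadj, ψh1, ψh2, ψh3, ψh4⟩, _⟩ := hψ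
    have ψinj : ∀ a b : Fin (m+1), (a:ℕ) ≠ 0 → (b:ℕ) ≠ 0 → ψ a = ψ b → a = b := by
      intro a b ha hb hab
      have h1 := ψh3 a (by simp [Set.mem_setOf_eq]; exact fun h => ha (by rw [h]; rfl))
      have h2 := ψh3 b (by simp [Set.mem_setOf_eq]; exact fun h => hb (by rw [h]; rfl))
      rw [← h1, ← h2, hab]
    set f : Fin m → Fin n := fun k => ψ ⟨(k:ℕ)+1, by omega⟩ with hfdef
    have hfmem : ∀ k, f k ∈ v := by
      intro k
      apply ψh1
      simp only [Set.mem_setOf_eq]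
      intro h
      have := congrArg Fin.val h
      simp at this
    have hfstrict : StrictMono f := by
      intro a b hab
      have hle : ψ ⟨(a:ℕ)+1, by omega⟩ ≤ ψ ⟨(b:ℕ)+1, by omega⟩ :=
        ψmono (Fin.mk_le_mk.mpr (by have := Fin.lt_def.mp hab; omega))
      rcases lt_or_eq_of_le hle with h | h
      · exact h
      · exfalso
        have := ψinj _ _ (by simp) (by simp) h
        have := congrArg Fin.val this
        simp at this
        omega
    have hfe : f = e := v.orderEmbOfFin_unique hv hfmem hfstrict
    funext i
    by_cases hi : (i:ℕ) = 0
    · rw [hφ0 i hi]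
      exact Fin.ext (ψ0 i hi)
    · have hi' : i = ⟨((i:ℕ)-1)+1, by have := i.isLt; omega⟩ := Fin.ext (by simp; omega)
      have := congrFun hfe ⟨(i:ℕ)-1, by have := i.isLt; omega⟩
      simp only [hfdef] at this
      rw [hi']
      rw [this, ← hφsucc]
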